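/- Let R be a commutative Noetherian ring and suppose P ⊋ P' ⊋ P'' is a chain of prime ideals of R. Then there are infinitely many prime ideals Q with P'' ⊊ Q ⊊ P. -/

import Mathlib

open IsLocalRing

/-- A finitely generated module annihilated by a maximal ideal is Artinian. -/
lemma isArtinian_of_killed_by_maximal {A N : Type*} [CommRing A] [AddCommGroup N] [Module A N]
    [Module.Finite A N] (M : Ideal A) (hM : M.IsMaximal)
    (h : ∀ (m : A), m ∈ M → ∀ n : N, m • n = 0) : IsArtinian A N := by
  have hsimple : IsSimpleModule A (A ⧸ M) := by
    rw [isSimpleModule_iff_isCoatom]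
    exact hM.out
  have hart : IsArtinian A (A ⧸ M) := by
    have : Finite (Submodule A (A ⧸ M)) := by
      classical
      exact Finite.of_equiv _ (@IsSimpleOrder.equivBool _ _ _ _ hsimple.toIsSimpleOrder).symm
    exact inferInstance
  have hcyc : ∀ x : N, IsArtinian A (Submodule.span A {x}) := by
    intro x
    have hker : M ≤ LinearMap.ker (LinearMap.toSpanSingleton A N x) := by
      intro m hm
      simpa using h m hm x
    have hsurj : Function.Surjective
        (Submodule.mapQ M (LinearMap.ker (LinearMap.toSpanSingleton A N x)) LinearMap.id hker) := by
      intro y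
      obtain ⟨a, rfl⟩ := Submodule.Quotient.mk_surjective _ y
      exact ⟨Submodule.Quotient.mk a, rfl⟩
    have h1 : IsArtinian A (A ⧸ LinearMap.ker (LinearMap.toSpanSingleton A N x)) :=
      isArtinian_of_surjective _ _ hsurj
    have h2 : IsArtinian A (LinearMap.range (LinearMap.toSpanSingleton A N x)) :=
      isArtinian_of_linearEquiv (LinearMap.toSpanSingleton A N x).quotKerEquivRange
    rw [LinearMap.span_singleton_eq_range]
    exact h2
  obtain ⟨s, hs⟩ := Module.Finite.fg_top (R := A) (M := N)
  have : IsArtinian A (⊤ : Submodule A N) := by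
    rw [← hs, Submodule.span_eq_iSup_of_singleton_spans, iSup_subtype']
    exact isArtinian_iSup
  exact isArtinian_of_linearEquiv (LinearEquiv.ofTop _ rfl)

/-- `A ⧸ M^k` is an Artinian `A`-module when `M` is maximal and `A` Noetherian. -/
lemma isArtinian_quotient_pow_maximal {A : Type*} [CommRing A] [IsNoetherianRing A]
    (M : Ideal A) (hM : M.IsMaximal) : ∀ k : ℕ, IsArtinian A (A ⧸ (M ^ k : Ideal A))
  | 0 => by
    have : Subsingleton (A ⧸ (M ^ 0 : Ideal A)) :=
      Submodule.Quotient.subsingleton_iff.mpr (by rw [pow_zero, Ideal.one_eq_top])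
    infer_instance
  | (k + 1) => by
    haveI ih := isArtinian_quotient_pow_maximal M hM k
    rw [isArtinian_iff_submodule_quotient
      (Submodule.map (M ^ (k + 1) : Ideal A).mkQ (M ^ k : Ideal A))]
    constructor
    · -- S is f.g. and killed by M
      have hfg : (Submodule.map (M ^ (k + 1) : Ideal A).mkQ (M ^ k : Ideal A)).FG :=
        ((IsNoetherian.noetherian (M ^ k : Ideal A))).map _
      have : Module.Finite A (Submodule.map (M ^ (k + 1) : Ideal A).mkQ (M ^ k : Ideal A)) :=
        Module.Finite.iff_fg.mpr hfg
      refine isArtinian_of_killed_by_maximal M hM ?_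
      rintro m hm ⟨n, hn⟩
      obtain ⟨a, ha, rfl⟩ := hn
      have hmem : m • a ∈ (M ^ (k + 1) : Ideal A) := by
        rw [pow_succ', smul_eq_mul]
        exact Ideal.mul_mem_mul hm ha
      apply Subtype.ext
      show m • ((M ^ (k + 1) : Ideal A).mkQ a) = 0
      rw [← map_smul, Submodule.mkQ_apply, Submodule.Quotient.mk_eq_zero]
      exact hmem
    · have hle : (M ^ (k + 1) : Ideal A) ≤ (M ^ k : Ideal A) := Ideal.pow_le_pow_right k.le_succ
      exact isArtinian_of_linearEquiv
        (Submodule.quotientQuotientEquivQuotient (M ^ (k + 1)) (M ^ k) hle).symm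
open IsLocalRing

/-- Krull's principal ideal theorem step: in a Noetherian local domain whose maximal ideal is
minimal over a principal ideal, there is no prime strictly between `⊥` and the maximal ideal. -/
lemma pit_aux {A : Type*} [CommRing A] [IsNoetherianRing A] [IsLocalRing A] [IsDomain A]
    (x : A) (hmin : maximalIdeal A ∈ (Ideal.span {x}).minimalPrimes)
    (q : Ideal A) (hq : q.IsPrime) (hqbot : q ≠ ⊥) (hqM : q ≠ maximalIdeal A) : False := by
  have hMprime : (maximalIdeal A).IsPrime := (maximalIdeal.isMaximal A).isPrime
  have hxM : x ∈ maximalIdeal A := hmin.1.2 (Ideal.subset_span rfl)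
  have hqleM : q ≤ maximalIdeal A := le_maximalIdeal hq.ne_top
  have hxq : x ∉ q := by
    intro h
    exact hqM (le_antisymm hqleM
      (hmin.2 ⟨hq, (Ideal.span_singleton_le_iff_mem q).mpr h⟩ hqleM))
  -- the radical of (x) is the maximal ideal
  have hrad : (Ideal.span {x}).radical = maximalIdeal A := by
    rw [Ideal.radical_eq_sInf]
    apply le_antisymm
    · exact sInf_le ⟨hmin.1.2, hMprime⟩
    · refine le_sInf ?_
      rintro J ⟨hJle, hJp⟩
      obtain ⟨r, hr, hrJ⟩ := Ideal.exists_minimalPrimes_le (J := J) hJle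
      exact (hmin.2 hr.1 (hrJ.trans (le_maximalIdeal hJp.ne_top))).trans hrJ
  obtain ⟨k, hk⟩ := Ideal.exists_radical_pow_le_of_fg (Ideal.span {x})
    (by rw [hrad]; exact IsNoetherian.noetherian _)
  rw [hrad] at hk
  -- symbolic powers of q
  set L := Localization.AtPrime q with hL
  set φ := algebraMap A L with hφ
  set Q : ℕ → Ideal A := fun n => (Ideal.map φ q ^ n).comap φ with hQ
  have hQanti : ∀ {m n : ℕ}, m ≤ n → Q n ≤ Q m :=
    fun h => Ideal.comap_mono (Ideal.pow_le_pow_right h)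
  -- the chain (Q n ⊔ (x)) stabilizes
  haveI hart := isArtinian_quotient_pow_maximal (maximalIdeal A) (maximalIdeal.isMaximal A) k
  have hJle : ∀ n : ℕ, (maximalIdeal A) ^ k ≤ Q n ⊔ Ideal.span {x} :=
    fun n => le_trans hk le_sup_right
  set f : ℕ →o (Submodule A (A ⧸ ((maximalIdeal A) ^ k : Ideal A)))ᵒᵈ :=
    ⟨fun n => Submodule.map ((maximalIdeal A) ^ k : Ideal A).mkQ (Q n ⊔ Ideal.span {x}),
      fun m n h => Submodule.map_mono (sup_le_sup_right (hQanti h) _)⟩ with hf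
  obtain ⟨n, hn⟩ := IsArtinian.monotone_stabilizes f
  have hstab : Q n ⊔ Ideal.span {x} = Q (n + 1) ⊔ Ideal.span {x} := by
    have h1 : Submodule.map ((maximalIdeal A) ^ k : Ideal A).mkQ (Q n ⊔ Ideal.span {x}) =
        Submodule.map ((maximalIdeal A) ^ k : Ideal A).mkQ (Q (n + 1) ⊔ Ideal.span {x}) :=
      hn (n + 1) n.le_succ
    have h2 := congrArg (Submodule.comap ((maximalIdeal A) ^ k : Ideal A).mkQ) h1
    rwa [Submodule.comap_map_mkQ, Submodule.comap_map_mkQ,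
      sup_eq_right.mpr (hJle n), sup_eq_right.mpr (hJle (n + 1))] at h2
  -- Nakayama step: Q n = Q (n+1)
  have hsub : Q n ≤ Q (n + 1) ⊔ (maximalIdeal A) • Q n := by
    intro a ha
    have haJ : a ∈ Q (n + 1) ⊔ Ideal.span {x} := hstab ▸ Submodule.mem_sup_left ha
    obtain ⟨b, hb, cx, hcx, rfl⟩ := Submodule.mem_sup.mp haJ
    obtain ⟨c, rfl⟩ := Ideal.mem_span_singleton'.mp hcx
    have hcxQ : c * x ∈ Q n := by
      have : b + c * x - b ∈ Q n := Submodule.sub_mem _ ha (hQanti n.le_succ hb)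
      simpa using this
    have hc : c ∈ Q n := by
      have hu : IsUnit (φ x) := IsLocalization.map_units L (⟨x, show x ∈ q.primeCompl from hxq⟩ : q.primeCompl)
      have hmem : φ c * φ x ∈ Ideal.map φ q ^ n := by
        have : φ (c * x) ∈ Ideal.map φ q ^ n := hcxQ
        rwa [map_mul] at this
      obtain ⟨u, hu⟩ := hu
      show φ c ∈ Ideal.map φ q ^ n
      have : φ c = φ c * φ x * ↑u⁻¹ := by
        rw [← hu, mul_assoc, u.mul_inv, mul_one]
      rw [this]
      exact Ideal.mul_mem_right _ _ hmem
    refine Submodule.mem_sup.mpr ⟨b, hb, c * x, ?_, rfl⟩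
    rw [smul_eq_mul, mul_comm c x]
    exact Ideal.mul_mem_mul hxM hc
  have hMjac : maximalIdeal A ≤ Ideal.jacobson ⊥ := by
    rw [IsLocalRing.jacobson_eq_maximalIdeal ⊥ bot_ne_top]
  have hQeq : Q n = Q (n + 1) :=
    le_antisymm (Submodule.le_of_le_smul_of_le_jacobson_bot (IsNoetherian.noetherian _)
      hMjac hsub) (hQanti n.le_succ)
  -- push to the localization and apply Nakayama there
  have h9 : Ideal.map φ q ^ n = Ideal.map φ q ^ (n + 1) := by
    have := congrArg (Ideal.map φ) hQeq
    rwa [hQ, IsLocalization.map_comap q.primeCompl L, IsLocalization.map_comap q.primeCompl L]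
      at this
  haveI : IsNoetherianRing L := IsLocalization.isNoetherianRing q.primeCompl L inferInstance
  have hMLjac : Ideal.map φ q ≤ Ideal.jacobson ⊥ := by
    rw [IsLocalRing.jacobson_eq_maximalIdeal ⊥ bot_ne_top]
    exact Localization.AtPrime.map_eq_maximalIdeal.le
  have h10 : Ideal.map φ q ^ n = ⊥ := by
    refine Submodule.eq_bot_of_le_smul_of_le_jacobson_bot (Ideal.map φ q) _
      (IsNoetherian.noetherian _) ?_ hMLjac
    exact le_of_eq (by rw [smul_eq_mul, mul_comm, ← pow_succ, ← h9])
  -- contradiction with q ≠ ⊥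
  have hy : ∃ y ∈ q, y ≠ (0 : A) := by
    by_contra h
    push_neg at h
    exact hqbot ((Submodule.eq_bot_iff q).mpr h)
  obtain ⟨y, hyq, hy0⟩ := hy
  haveI : IsDomain L := IsLocalization.isDomain_localization q.primeCompl_le_nonZeroDivisors
  have hyL : φ y ≠ 0 := fun h =>
    hy0 (IsLocalization.injective L q.primeCompl_le_nonZeroDivisors
      (by rw [h, map_zero]))
  have hypow : φ y ^ n ∈ (Ideal.map φ q) ^ n :=
    Ideal.pow_mem_pow (Ideal.mem_map_of_mem φ hyq) n
  rw [h10, Ideal.mem_bot] at hypow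
  exact pow_ne_zero n hyL hypow
open IsLocalRing

/-- Krull's principal ideal theorem step in a Noetherian domain: if `p` is minimal over a
principal ideal then there is no prime strictly between `⊥` and `p`. -/
lemma pit_domain {D : Type*} [CommRing D] [IsNoetherianRing D] [IsDomain D]
    (x : D) (p p' : Ideal D) (hp : p.IsPrime) (hp' : p'.IsPrime)
    (hmin : p ∈ (Ideal.span {x}).minimalPrimes)
    (hbot : p' ≠ ⊥) (hlt : p' < p) : False := by
  set A := Localization.AtPrime p with hA
  set ψ := algebraMap D A with hψ
  haveI : IsNoetherianRing A := IsLocalization.isNoetherianRing p.primeCompl A inferInstance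
  haveI : IsDomain A := IsLocalization.isDomain_localization p.primeCompl_le_nonZeroDivisors
  have hmax : Ideal.map ψ p = maximalIdeal A := Localization.AtPrime.map_eq_maximalIdeal
  have hdisj : Disjoint (p.primeCompl : Set D) (p' : Set D) := by
    rw [Set.disjoint_left]
    intro a ha ha'
    exact ha (hlt.le ha')
  have hq : (Ideal.map ψ p').IsPrime :=
    IsLocalization.isPrime_of_isPrime_disjoint p.primeCompl A p' hp' hdisj
  have hxp : x ∈ p := hmin.1.2 (Ideal.subset_span rfl)
  have hminA : maximalIdeal A ∈ (Ideal.span {ψ x}).minimalPrimes := by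
    constructor
    · refine ⟨(maximalIdeal.isMaximal A).isPrime, ?_⟩
      rw [← hmax]
      exact (Ideal.span_singleton_le_iff_mem _).mpr (Ideal.mem_map_of_mem ψ hxp)
    · rintro r ⟨hrprime, hrle⟩ hrM
      have hcr : (Ideal.comap ψ r).IsPrime := hrprime.comap ψ
      have h1 : Ideal.span {x} ≤ Ideal.comap ψ r := by
        rw [Ideal.span_singleton_le_iff_mem]
        exact hrle (Ideal.subset_span rfl)
      have h2 : Ideal.comap ψ r ≤ p := by
        have := Ideal.comap_mono (f := ψ) hrM
        exact this.trans (IsLocalization.AtPrime.comap_maximalIdeal A p).le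
      have h3 : p ≤ Ideal.comap ψ r := hmin.2 ⟨hcr, h1⟩ h2
      calc maximalIdeal A = Ideal.map ψ p := hmax.symm
        _ ≤ Ideal.map ψ (Ideal.comap ψ r) := Ideal.map_mono h3
        _ = r := IsLocalization.map_comap p.primeCompl A r
  refine pit_aux (ψ x) hminA (Ideal.map ψ p') hq ?_ ?_
  · intro h
    have hy : ∃ y ∈ p', y ≠ (0 : D) := by
      by_contra hc
      push_neg at hc
      exact hbot ((Submodule.eq_bot_iff p').mpr hc)
    obtain ⟨y, hyq, hy0⟩ := hy
    have : ψ y ∈ Ideal.map ψ p' := Ideal.mem_map_of_mem ψ hyq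
    rw [h, Ideal.mem_bot] at this
    exact hy0 (IsLocalization.injective A p.primeCompl_le_nonZeroDivisors
      (by rw [this, map_zero]))
  · intro h
    have := congrArg (Ideal.comap ψ) h
    change Ideal.under D (Ideal.map (algebraMap D A) p') = Ideal.under D (maximalIdeal A) at this
    rw [IsLocalization.comap_map_of_isPrime_disjoint p.primeCompl A hp' hdisj,
      IsLocalization.AtPrime.comap_maximalIdeal A p] at this
    exact hlt.ne this

/-- In a commutative Noetherian ring, a saturated-or-not chain `P ⊋ P' ⊋ P''` of primes forces
infinitely many primes strictly between `P''` and `P`. -/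
theorem infinitely_many_primes_between {R : Type*} [CommRing R] [IsNoetherianRing R]
    (P P' P'' : Ideal R) (hP : P.IsPrime) (hP' : P'.IsPrime) (hP'' : P''.IsPrime)
    (h1 : P'' < P') (h2 : P' < P) :
    {Q : Ideal R | Q.IsPrime ∧ P'' < Q ∧ Q < P}.Infinite := by
  classical
  by_contra hinf
  rw [Set.not_infinite] at hinf
  haveI := hP
  haveI := hP''
  set S := {Q : Ideal R | Q.IsPrime ∧ P'' < Q ∧ Q < P} with hS
  set s : Finset (Ideal R) := insert P'' hinf.toFinset with hs
  have hprimes : ∀ i ∈ s, i ≠ P'' → i ≠ P'' → (id i).IsPrime := by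
    intro i hi hne _
    rcases Finset.mem_insert.mp hi with rfl | hi
    · exact absurd rfl hne
    · exact (hinf.mem_toFinset.mp hi).1
  have hnot : ¬ ((P : Set R) ⊆ ⋃ i ∈ (s : Set (Ideal R)), ↑(id i)) := by
    rw [Ideal.subset_union_prime P'' P'' hprimes]
    rintro ⟨i, hi, hle⟩
    rcases Finset.mem_insert.mp hi with rfl | hi
    · exact absurd (lt_of_le_of_lt hle (h1.trans h2)) (lt_irrefl _)
    · exact absurd (lt_of_le_of_lt hle (hinf.mem_toFinset.mp hi).2.2) (lt_irrefl _)
  obtain ⟨x, hxP, hxU⟩ := Set.not_subset.mp hnot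
  have hx : ∀ i ∈ s, x ∉ i := by
    intro i hi hxi
    exact hxU (Set.mem_biUnion (Finset.mem_coe.mpr hi) hxi)
  have hxP'' : x ∉ P'' := hx P'' (Finset.mem_insert_self _ _)
  have hxspan : x ∈ P'' ⊔ Ideal.span {x} :=
    Ideal.mem_sup_right (Ideal.subset_span rfl)
  have hIP : P'' ⊔ Ideal.span {x} ≤ P :=
    sup_le (h1.le.trans h2.le) ((Ideal.span_singleton_le_iff_mem _).mpr hxP)
  obtain ⟨p₀, hp₀, hp₀P⟩ := Ideal.exists_minimalPrimes_le (J := P) hIP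
  have hp₀prime : p₀.IsPrime := hp₀.1.1
  have hp₀eq : p₀ = P := by
    by_contra hne
    have hP''p₀ : P'' < p₀ :=
      lt_of_le_of_ne (le_sup_left.trans hp₀.1.2)
        (by rintro rfl; exact hxP'' (hp₀.1.2 hxspan))
    have hmem : p₀ ∈ S := ⟨hp₀prime, hP''p₀, lt_of_le_of_ne hp₀P hne⟩
    exact hx p₀ (Finset.mem_insert_of_mem (hinf.mem_toFinset.mpr hmem)) (hp₀.1.2 hxspan)
  subst hp₀eq
  -- pass to the quotient domain `R ⧸ P''`
  set D := R ⧸ P'' with hD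
  set π := Ideal.Quotient.mk P'' with hπ
  have hsurj : Function.Surjective π := Ideal.Quotient.mk_surjective
  have hker : RingHom.ker π = P'' := Ideal.mk_ker
  have hpprime : (Ideal.map π p₀).IsPrime :=
    Ideal.map_isPrime_of_surjective hsurj (by rw [hker]; exact (h1.trans h2).le)
  have hp'prime : (Ideal.map π P').IsPrime :=
    Ideal.map_isPrime_of_surjective hsurj (by rw [hker]; exact h1.le)
  have hcomapP : Ideal.comap π (Ideal.map π p₀) = p₀ := by
    rw [Ideal.comap_map_of_surjective π hsurj, ← RingHom.ker_eq_comap_bot, hker]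
    exact sup_eq_left.mpr (h1.le.trans h2.le)
  have hcomapP' : Ideal.comap π (Ideal.map π P') = P' := by
    rw [Ideal.comap_map_of_surjective π hsurj, ← RingHom.ker_eq_comap_bot, hker]
    exact sup_eq_left.mpr h1.le
  have hp'bot : Ideal.map π P' ≠ ⊥ := by
    intro h
    have : P' ≤ P'' := by
      rw [← hker]
      intro a ha
      have : π a ∈ Ideal.map π P' := Ideal.mem_map_of_mem π ha
      rwa [h, Ideal.mem_bot] at this
    exact absurd (lt_of_lt_of_le h1 this) (lt_irrefl _)
  have hp'ltp : Ideal.map π P' < Ideal.map π p₀ := by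
    refine lt_of_le_of_ne (Ideal.map_mono h2.le) ?_
    intro h
    have := congrArg (Ideal.comap π) h
    rw [hcomapP, hcomapP'] at this
    exact h2.ne this
  have hminD : Ideal.map π p₀ ∈ (Ideal.span {π x}).minimalPrimes := by
    constructor
    · exact ⟨hpprime, (Ideal.span_singleton_le_iff_mem _).mpr
        (Ideal.mem_map_of_mem π hxP)⟩
    · rintro r ⟨hrp, hrle⟩ hrlep
      have hcr : (Ideal.comap π r).IsPrime := hrp.comap π
      have h1' : P'' ⊔ Ideal.span {x} ≤ Ideal.comap π r := by
        refine sup_le ?_ ?_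
        · intro a ha
          show π a ∈ r
          have : π a = 0 := by
            rw [← RingHom.mem_ker, hker]; exact ha
          rw [this]; exact r.zero_mem
        · rw [Ideal.span_singleton_le_iff_mem]
          exact hrle (Ideal.subset_span rfl)
      have h2' : Ideal.comap π r ≤ p₀ := by
        have := Ideal.comap_mono (f := π) hrlep
        rwa [hcomapP] at this
      have h3' : p₀ ≤ Ideal.comap π r := hp₀.2 ⟨hcr, h1'⟩ h2'
      calc Ideal.map π p₀ ≤ Ideal.map π (Ideal.comap π r) := Ideal.map_mono h3'
        _ = r := Ideal.map_comap_of_surjective π hsurj r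
  exact pit_domain (π x) (Ideal.map π p₀) (Ideal.map π P') hpprime hp'prime hminD hp'bot hp'ltp
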